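/- Multiplicativity of the Herbrand quotient: given a short exact sequence 0 → M' → M → M'' → 0 of modules over a finite cyclic group G, if two of the Herbrand quotients h(M'), h(M), h(M'') are defined then so is the third, and h(M) = h(M')·h(M''). -/

import Mathlib

namespace Tate

variable (G : Type) [Group G] (M : Type) [AddCommGroup M] [DistribMulAction G M]

/-- Inhomogeneous (co)chain groups: functions `G^m → M`. -/
abbrev C (m : ℕ) : Type := (Fin m → G) → M

/-- The standard inhomogeneous coboundary map. -/
def dPlus (m : ℕ) : C G M m →+ C G M (m + 1) :=
  AddMonoidHom.mk' (fun f g =>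
    g 0 • f (fun i => g i.succ) +
      ∑ j : Fin (m + 1), ((-1 : ℤ) ^ (j.val + 1)) • f (Fin.contractNth j (· * ·) g))
    (fun a b => by
      funext g
      simp only [Pi.add_apply, smul_add, Finset.sum_add_distrib]
      abel)

variable [Finite G]

/-- The norm map on (co)chains. -/
noncomputable def normMap (m : ℕ) : C G M m →+ C G M m :=
  letI : Fintype G := Fintype.ofFinite G
  AddMonoidHom.mk' (fun f x => ∑ g : G, g • f x)
    (fun a b => by
      funext x
      simp only [Pi.add_apply, smul_add, Finset.sum_add_distrib])

/-- The standard inhomogeneous boundary map on chains of a finite group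
(chains of a finite group are plain functions `G^m → M`). -/
noncomputable def dMinus (m : ℕ) : C G M (m + 1) →+ C G M m :=
  letI : Fintype G := Fintype.ofFinite G
  letI := Classical.decEq G
  AddMonoidHom.mk' (fun f h =>
    (∑ g : G, g⁻¹ • f (Fin.cons g h)) +
      (∑ j : Fin m, ((-1 : ℤ) ^ (j.val + 1)) •
        ∑ g : G, f (Fin.insertNth j.castSucc g (Function.update h j (g⁻¹ * h j)))) +
      ((-1 : ℤ) ^ (m + 1)) • ∑ g : G, f (Fin.snoc h g))
    (fun a b => by
      funext x
      simp only [Pi.add_apply, smul_add, Finset.sum_add_distrib]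
      abel)

/-- The size of the tuples at degree `n` of the complete standard complex. -/
def dim : ℤ → ℕ
  | .ofNat m => m
  | .negSucc m => m

/-- Cocycles of the complete standard complex. -/
noncomputable def cocycles : ∀ n : ℤ, AddSubgroup (C G M (dim n))
  | .ofNat m => (dPlus G M m).ker
  | .negSucc 0 => (normMap G M 0).ker
  | .negSucc (m + 1) => (dMinus G M m).ker

/-- Coboundaries of the complete standard complex. -/
noncomputable def boundaries : ∀ n : ℤ, AddSubgroup (C G M (dim n))
  | .ofNat 0 => (normMap G M 0).range
  | .ofNat (m + 1) => (dPlus G M m).range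
  | .negSucc m => (dMinus G M m).range

/-- Tate cohomology of a finite group `G` with coefficients in the `G`-module `M`:
`H_T^n(G, M)` for all `n : ℤ`. -/
noncomputable def tate (n : ℤ) : Type :=
  cocycles G M n ⧸ (boundaries G M n).addSubgroupOf (cocycles G M n)

noncomputable instance (n : ℤ) : AddCommGroup (tate G M n) :=
  inferInstanceAs (AddCommGroup (_ ⧸ _))

end Tate

/-- The trivial action of a group on an abelian group. -/
def Tate.trivialAction (G M : Type) [Group G] [AddCommGroup M] : DistribMulAction G M where
  smul _ m := m
  one_smul _ := rfl
  mul_smul _ _ _ := rfl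
  smul_zero _ := rfl
  smul_add _ _ _ := rfl

namespace Tate

variable (G : Type) [Group G] [Finite G] (M : Type) [AddCommGroup M] [DistribMulAction G M]

/-- The Herbrand quotient `h(M) = |H_T^0(G,M)| / |H_T^1(G,M)|`. -/
noncomputable def herbrand : ℚ :=
  (Nat.card (tate G M 0) : ℚ) / (Nat.card (tate G M 1) : ℚ)

/-- The Herbrand quotient is defined when both `H_T^0(G,M)` and `H_T^1(G,M)` are finite. -/
def HerbrandDefined : Prop :=
  Finite (tate G M 0) ∧ Finite (tate G M 1)

end Tate

namespace HQ

variable {A B C : Type} [AddCommGroup A] [AddCommGroup B] [AddCommGroup C]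


/-- A 2-periodic complex structure on an abelian group. -/
structure Pair (A : Type) [AddCommGroup A] where
  d : A →+ A
  n : A →+ A
  dn : ∀ a, d (n a) = 0
  nd : ∀ a, n (d a) = 0

abbrev Pair.swap (P : Pair A) : Pair A := ⟨P.n, P.d, P.nd, P.dn⟩

/-- Cohomology `ker d / im n`. -/
abbrev Pair.H (P : Pair A) : Type := P.d.ker ⧸ (P.n.range.addSubgroupOf P.d.ker)

noncomputable instance (P : Pair A) : AddCommGroup P.H :=
  inferInstanceAs (AddCommGroup (_ ⧸ _))

def Pair.mk' (P : Pair A) (a : A) (ha : P.d a = 0) : P.H :=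
  QuotientAddGroup.mk (⟨a, AddMonoidHom.mem_ker.mpr ha⟩ : P.d.ker)

lemma Pair.mk'_eq_iff (P : Pair A) (a b : A) (ha : P.d a = 0) (hb : P.d b = 0) :
    P.mk' a ha = P.mk' b hb ↔ ∃ x, b - a = P.n x := by
  rw [Pair.mk', Pair.mk', QuotientAddGroup.eq, AddSubgroup.mem_addSubgroupOf]
  simp only [AddSubgroup.coe_add, AddSubgroup.coe_neg, AddMonoidHom.mem_range]
  constructor
  · rintro ⟨x, hx⟩; exact ⟨x, by rw [sub_eq_neg_add]; exact hx.symm⟩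
  · rintro ⟨x, hx⟩; exact ⟨x, by rw [← sub_eq_neg_add]; exact hx.symm⟩

lemma Pair.mk'_eq_zero_iff (P : Pair A) (a : A) (ha : P.d a = 0) :
    P.mk' a ha = 0 ↔ ∃ x, a = P.n x := by
  have h0 : (0 : P.H) = P.mk' 0 (map_zero _) := rfl
  rw [h0, P.mk'_eq_iff a 0 ha (map_zero _)]
  constructor
  · rintro ⟨x, hx⟩; exact ⟨-x, by rw [map_neg, ← hx]; abel⟩
  · rintro ⟨x, hx⟩; exact ⟨-x, by rw [map_neg, ← hx]; abel⟩

lemma Pair.mk'_surjective (P : Pair A) (x : P.H) : ∃ a ha, P.mk' a ha = x := by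
  obtain ⟨⟨a, ha⟩, rfl⟩ := QuotientAddGroup.mk_surjective x
  exact ⟨a, ha, rfl⟩

lemma Pair.mk'_add (P : Pair A) (a b : A) (ha : P.d a = 0) (hb : P.d b = 0) :
    P.mk' (a + b) (by rw [map_add, ha, hb, add_zero]) = P.mk' a ha + P.mk' b hb := rfl

/-- Map induced on cohomology by a compatible homomorphism. -/
def Hmap (P : Pair A) (Q : Pair B) (f : A →+ B)
    (hd : ∀ a, f (P.d a) = Q.d (f a)) (hn : ∀ a, f (P.n a) = Q.n (f a)) :
    P.H →+ Q.H :=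
  QuotientAddGroup.map _ _
    ((f.comp P.d.ker.subtype).codRestrict Q.d.ker
      (fun x => by
        have hx : P.d x.1 = 0 := x.2
        simp [AddMonoidHom.mem_ker, ← hd, hx]))
    (by
      rintro ⟨a, hka⟩ ha
      rw [AddSubgroup.mem_addSubgroupOf] at ha
      obtain ⟨x, hx⟩ := ha
      rw [AddSubgroup.mem_comap, AddSubgroup.mem_addSubgroupOf]
      refine ⟨f x, ?_⟩
      have : (a : A) = P.n x := hx.symm
      simp [AddMonoidHom.codRestrict_apply, this, hn]
      exact (hn x).symm)

lemma Hmap_mk' (P : Pair A) (Q : Pair B) (f : A →+ B) (hd) (hn) (a : A) (ha : P.d a = 0) :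
    Hmap P Q f hd hn (P.mk' a ha) = Q.mk' (f a) (by rw [← hd, ha, map_zero]) := rfl


structure SES (PA : Pair A) (PB : Pair B) (PC : Pair C) (f : A →+ B) (g : B →+ C) : Prop where
  hf : Function.Injective f
  hg : Function.Surjective g
  hfg : f.range = g.ker
  fd : ∀ a, f (PA.d a) = PB.d (f a)
  fn : ∀ a, f (PA.n a) = PB.n (f a)
  gd : ∀ b, g (PB.d b) = PC.d (g b)
  gn : ∀ b, g (PB.n b) = PC.n (g b)

variable {PA : Pair A} {PB : Pair B} {PC : Pair C} {f : A →+ B} {g : B →+ C}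

lemma SES.swap (h : SES PA PB PC f g) : SES PA.swap PB.swap PC.swap f g :=
  ⟨h.hf, h.hg, h.hfg, h.fn, h.fd, h.gn, h.gd⟩

lemma SES.mem_range {b : B} (h : SES PA PB PC f g) (hb : g b = 0) : ∃ a, f a = b := by
  have : b ∈ f.range := by rw [h.hfg]; exact hb
  exact this

lemma snake_aux (h : SES PA PB PC f g) {b : B} {a : A}
    (ha : f a = PB.d b) : PA.swap.d a = 0 := by
  apply h.hf
  show f (PA.n a) = f 0
  rw [h.fn, ha, map_zero, PB.nd]

lemma delta_exists (h : SES PA PB PC f g) (x : PC.d.ker) :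
    ∃ a : A, ∃ b : B, g b = x.1 ∧ f a = PB.d b := by
  obtain ⟨b, hb⟩ := h.hg x.1
  have hker : g (PB.d b) = 0 := by
    rw [h.gd, hb]; exact x.2
  obtain ⟨a, ha⟩ := h.mem_range hker
  exact ⟨a, b, hb, ha⟩

noncomputable def delta0 (h : SES PA PB PC f g) (x : PC.d.ker) : PA.swap.H :=
  PA.swap.mk' (Classical.choose (delta_exists h x))
    (by obtain ⟨b, hb, ha⟩ := Classical.choose_spec (delta_exists h x)
        exact snake_aux h ha)

lemma delta0_eq (h : SES PA PB PC f g) (x : PC.d.ker) {b : B} {a : A}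
    (hb : g b = x.1) (ha : f a = PB.d b) :
    delta0 h x = PA.swap.mk' a (snake_aux h ha) := by
  obtain ⟨b₀, hb₀, ha₀⟩ := Classical.choose_spec (delta_exists h x)
  set a₀ := Classical.choose (delta_exists h x)
  rw [delta0, Pair.mk'_eq_iff]
  have hbb : g (b - b₀) = 0 := by rw [map_sub, hb, hb₀, sub_self]
  obtain ⟨y, hy⟩ := h.mem_range hbb
  refine ⟨y, h.hf ?_⟩
  show f (a - a₀) = f (PA.swap.n y)
  show f (a - a₀) = f (PA.d y)
  rw [map_sub, ha, ha₀, h.fd, hy, map_sub]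

lemma delta0_add (h : SES PA PB PC f g) (x y : PC.d.ker) :
    delta0 h (x + y) = delta0 h x + delta0 h y := by
  obtain ⟨bx, hbx, hax⟩ := Classical.choose_spec (delta_exists h x)
  obtain ⟨by', hby, hay⟩ := Classical.choose_spec (delta_exists h y)
  set ax := Classical.choose (delta_exists h x)
  set ay := Classical.choose (delta_exists h y)
  have hb : g (bx + by') = (x + y).1 := by rw [map_add, hbx, hby]; rfl
  have ha : f (ax + ay) = PB.d (bx + by') := by rw [map_add, hax, hay, map_add]
  rw [delta0_eq h (x + y) hb ha, delta0, delta0, ← Pair.mk'_add]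

lemma delta0_boundary (h : SES PA PB PC f g) (x : PC.d.ker)
    (hx : x ∈ PC.n.range.addSubgroupOf PC.d.ker) : delta0 h x = 0 := by
  rw [AddSubgroup.mem_addSubgroupOf] at hx
  obtain ⟨z, hz⟩ := hx
  obtain ⟨w, hw⟩ := h.hg z
  have hb : g (PB.n w) = x.1 := by rw [h.gn, hw, hz]
  have ha : f 0 = PB.d (PB.n w) := by rw [map_zero, PB.dn]
  rw [delta0_eq h x hb ha, Pair.mk'_eq_zero_iff]
  exact ⟨0, by rw [map_zero]⟩

noncomputable def delta (h : SES PA PB PC f g) : PC.H →+ PA.swap.H :=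
  QuotientAddGroup.lift _ (AddMonoidHom.mk' (delta0 h) (delta0_add h))
    (fun x hx => delta0_boundary h x hx)

lemma delta_mk' (h : SES PA PB PC f g) {c : C} (hc : PC.d c = 0) {b : B} {a : A}
    (hb : g b = c) (ha : f a = PB.d b) :
    delta h (PC.mk' c hc) = PA.swap.mk' a (snake_aux h ha) :=
  delta0_eq h ⟨c, hc⟩ hb ha

end HQ

namespace HQ
variable {A B C : Type} [AddCommGroup A] [AddCommGroup B] [AddCommGroup C]
variable {PA : Pair A} {PB : Pair B} {PC : Pair C} {f : A →+ B} {g : B →+ C}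

lemma exact_one (h : SES PA PB PC f g) :
    Function.Exact (Hmap PA PB f h.fd h.fn) (Hmap PB PC g h.gd h.gn) := by
  intro y
  obtain ⟨b, hb, rfl⟩ := PB.mk'_surjective y
  rw [Hmap_mk', Pair.mk'_eq_zero_iff]
  constructor
  · rintro ⟨c, hc⟩
    obtain ⟨w, hw⟩ := h.hg c
    have hbw : g (b - PB.n w) = 0 := by rw [map_sub, h.gn, hw, hc, sub_self]
    obtain ⟨a, ha⟩ := h.mem_range hbw
    have had : PA.d a = 0 := by
      apply h.hf
      rw [h.fd, ha, map_sub, map_zero, hb, PB.dn, sub_zero]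
    refine ⟨PA.mk' a had, ?_⟩
    rw [Hmap_mk']
    rw [Pair.mk'_eq_iff]
    exact ⟨w, by rw [ha]; abel⟩
  · rintro ⟨x, hx⟩
    obtain ⟨a, ha, rfl⟩ := PA.mk'_surjective x
    rw [Hmap_mk', Pair.mk'_eq_iff] at hx
    obtain ⟨w, hw⟩ := hx
    refine ⟨g w, ?_⟩
    have : g (f a) = 0 := by
      have : f a ∈ g.ker := by rw [← h.hfg]; exact ⟨a, rfl⟩
      exact this
    calc g b = g (b - f a) + g (f a) := by rw [map_sub]; abel
    _ = g (PB.n w) := by rw [this, add_zero, hw]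
    _ = PC.n (g w) := h.gn w

lemma exact_two (h : SES PA PB PC f g) :
    Function.Exact (Hmap PB PC g h.gd h.gn) (delta h) := by
  intro y
  obtain ⟨c, hc, rfl⟩ := PC.mk'_surjective y
  constructor
  · intro hy
    obtain ⟨b, hb⟩ := h.hg c
    have hker : g (PB.d b) = 0 := by rw [h.gd, hb, hc]
    obtain ⟨a, ha⟩ := h.mem_range hker
    rw [delta_mk' h hc hb ha, Pair.mk'_eq_zero_iff] at hy
    obtain ⟨x, hx⟩ := hy
    -- a = PA.d x ; replace b by b - f x
    have hb' : g (b - f x) = c := by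
      have : g (f x) = 0 := by
        have : f x ∈ g.ker := by rw [← h.hfg]; exact ⟨x, rfl⟩
        exact this
      rw [map_sub, this, sub_zero, hb]
    have hdb' : PB.d (b - f x) = 0 := by
      have hfd : f (PA.d x) = PB.d (f x) := h.fd x
      have hax : PA.d x = a := hx.symm
      rw [map_sub, ← hfd, hax, ha, sub_self]
    refine ⟨PB.mk' (b - f x) hdb', ?_⟩
    rw [Hmap_mk', Pair.mk'_eq_iff]
    exact ⟨0, by rw [map_zero, hb', sub_self]⟩
  · rintro ⟨x, hx⟩
    obtain ⟨b, hb, rfl⟩ := PB.mk'_surjective x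
    rw [Hmap_mk'] at hx
    -- delta of mk' (g b): witnesses b, 0
    have ha : f 0 = PB.d b := by rw [map_zero, hb]
    have hgb : PC.d (g b) = 0 := by rw [← h.gd, hb, map_zero]
    have := delta_mk' h hgb rfl ha
    have hy : delta h (PC.mk' c hc) = delta h (PC.mk' (g b) hgb) := by rw [hx]
    rw [hy, this, Pair.mk'_eq_zero_iff]
    exact ⟨0, by rw [map_zero]⟩

lemma exact_three (h : SES PA PB PC f g) :
    Function.Exact (delta h) (Hmap PA.swap PB.swap f h.fn h.fd) := by
  intro y
  obtain ⟨a, ha, rfl⟩ := PA.swap.mk'_surjective y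
  rw [Hmap_mk', Pair.mk'_eq_zero_iff]
  constructor
  · rintro ⟨b, hb⟩
    -- f a = PB.swap.n b = PB.d b
    have hb' : f a = PB.d b := hb
    have hfa0 : g (f a) = 0 := by
      have : f a ∈ g.ker := by rw [← h.hfg]; exact ⟨a, rfl⟩
      exact this
    have hgb : PC.d (g b) = 0 := by rw [← h.gd, ← hb']; exact hfa0
    refine ⟨PC.mk' (g b) hgb, ?_⟩
    exact delta_mk' h hgb rfl hb'
  · rintro ⟨x, hx⟩
    obtain ⟨c, hc, rfl⟩ := PC.mk'_surjective x
    obtain ⟨b, hb⟩ := h.hg c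
    have hker : g (PB.d b) = 0 := by rw [h.gd, hb, hc]
    obtain ⟨a', ha'⟩ := h.mem_range hker
    rw [delta_mk' h hc hb ha', Pair.mk'_eq_iff] at hx
    obtain ⟨w, hw⟩ := hx
    -- a - a' = PA.swap.n w = PA.d w ; f a = PB.d (b + ...)?
    refine ⟨b + f w, ?_⟩
    show f a = PB.d (b + f w)
    have hw' : a - a' = PA.d w := hw
    have h1 : a = a' + PA.d w := by rw [← hw']; abel
    rw [h1, map_add, map_add, ha', h.fd]
  
end HQ

namespace HQ
section Counting
variable {X Y Z : Type} [AddCommGroup X] [AddCommGroup Y] [AddCommGroup Z]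

lemma finite_of_exact (f : X →+ Y) (g : Y →+ Z) (h : Function.Exact f g)
    (hX : Finite X) (hZ : Finite Z) : Finite Y := by
  have hker : Finite g.ker := by
    have hsub : (g.ker : Set Y) ⊆ Set.range f := fun y hy => (h y).mp hy
    have : Finite ((g.ker : Set Y)) := ((Set.finite_range f).subset hsub).to_subtype
    exact this
  have hquot : Finite (Y ⧸ g.ker) := by
    have e := QuotientAddGroup.quotientKerEquivRange g
    have : Finite g.range := Subtype.finite
    exact Finite.of_equiv _ e.symm.toEquiv
  exact Finite.of_equiv ((Y ⧸ g.ker) × g.ker)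
    (AddSubgroup.addGroupEquivQuotientProdAddSubgroup (s := g.ker)).symm

lemma card_formula (g : Y →+ Z) :
    Nat.card Y = Nat.card g.ker * Nat.card g.range := by
  have e1 : Y ≃ (Y ⧸ g.ker) × g.ker := AddSubgroup.addGroupEquivQuotientProdAddSubgroup
  have e2 : (Y ⧸ g.ker) ≃+ g.range := QuotientAddGroup.quotientKerEquivRange g
  rw [Nat.card_congr e1, Nat.card_prod, Nat.card_congr e2.toEquiv, mul_comm]

lemma card_range_eq_card_ker (f : X →+ Y) (g : Y →+ Z) (h : Function.Exact f g) :
    Nat.card f.range = Nat.card g.ker := by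
  apply Nat.card_congr
  apply Equiv.subtypeEquiv (Equiv.refl Y)
  intro y
  simp only [Equiv.refl_apply]
  constructor
  · rintro ⟨x, rfl⟩; exact (h (f x)).mpr ⟨x, rfl⟩
  · intro hy; exact (h y).mp hy

end Counting
end HQ

namespace HQ
lemma hexagon_card {A₁ A₂ A₃ A₄ A₅ A₆ : Type}
    [AddCommGroup A₁] [AddCommGroup A₂] [AddCommGroup A₃]
    [AddCommGroup A₄] [AddCommGroup A₅] [AddCommGroup A₆]
    (f₁ : A₁ →+ A₂) (f₂ : A₂ →+ A₃) (f₃ : A₃ →+ A₄)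
    (f₄ : A₄ →+ A₅) (f₅ : A₅ →+ A₆) (f₆ : A₆ →+ A₁)
    (h₁ : Function.Exact f₁ f₂) (h₂ : Function.Exact f₂ f₃)
    (h₃ : Function.Exact f₃ f₄) (h₄ : Function.Exact f₄ f₅)
    (h₅ : Function.Exact f₅ f₆) (h₆ : Function.Exact f₆ f₁) :
    Nat.card A₁ * Nat.card A₃ * Nat.card A₅ =
      Nat.card A₂ * Nat.card A₄ * Nat.card A₆ := by
  have c1 := card_formula f₁
  have c2 := card_formula f₂
  have c3 := card_formula f₃
  have c4 := card_formula f₄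
  have c5 := card_formula f₅
  have c6 := card_formula f₆
  rw [card_range_eq_card_ker f₁ f₂ h₁] at c1
  rw [card_range_eq_card_ker f₂ f₃ h₂] at c2
  rw [card_range_eq_card_ker f₃ f₄ h₃] at c3
  rw [card_range_eq_card_ker f₄ f₅ h₄] at c4
  rw [card_range_eq_card_ker f₅ f₆ h₅] at c5
  rw [card_range_eq_card_ker f₆ f₁ h₆] at c6
  rw [c1, c2, c3, c4, c5, c6]
  ring
end HQ

namespace HQ
variable {A B C : Type} [AddCommGroup A] [AddCommGroup B] [AddCommGroup C]
variable {PA : Pair A} {PB : Pair B} {PC : Pair C} {f : A →+ B} {g : B →+ C}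

set_option maxHeartbeats 2000000 in
/-- The connecting map `Hn(C) → Hd(A)`. -/
noncomputable def delta' (h : SES PA PB PC f g) : PC.swap.H →+ PA.H := delta h.swap

set_option maxHeartbeats 2000000 in
lemma exact_five' (h : SES PA PB PC f g) :
    Function.Exact (Hmap PB.swap PC.swap g h.gn h.gd) (delta' h) := exact_two h.swap

set_option maxHeartbeats 2000000 in
lemma exact_six' (h : SES PA PB PC f g) :
    Function.Exact (delta' h) (Hmap PA PB f h.fd h.fn) := exact_three h.swap
end HQ

namespace HQ
open Tate

variable (G : Type) [Group G] [Finite G] (M : Type) [AddCommGroup M] [DistribMulAction G M]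

noncomputable def Nhom : M →+ M :=
  letI : Fintype G := Fintype.ofFinite G
  AddMonoidHom.mk' (fun m => ∑ g : G, g • m) (fun a b => by
    simp only [smul_add, Finset.sum_add_distrib])

def Dhom (σ : G) : M →+ M :=
  AddMonoidHom.mk' (fun m => σ • m - m) (fun a b => by
    show σ • (a + b) - (a + b) = (σ • a - a) + (σ • b - b); rw [smul_add]; abel)

variable {G}

lemma Nhom_apply (m : M) :
    letI : Fintype G := Fintype.ofFinite G
    Nhom G M m = ∑ g : G, g • m := rfl

lemma smul_Nhom (σ : G) (m : M) : σ • (Nhom G M m) = Nhom G M m := by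
  letI : Fintype G := Fintype.ofFinite G
  show σ • ∑ g : G, g • m = ∑ g : G, g • m
  rw [Finset.smul_sum]
  apply Fintype.sum_equiv (Equiv.mulLeft σ)
  intro x
  rw [Equiv.coe_mulLeft, mul_smul]

lemma Nhom_smul (σ : G) (m : M) : Nhom G M (σ • m) = Nhom G M m := by
  letI : Fintype G := Fintype.ofFinite G
  show ∑ g : G, g • σ • m = ∑ g : G, g • m
  apply Fintype.sum_equiv (Equiv.mulRight σ)
  intro x
  rw [Equiv.coe_mulRight, mul_smul]

noncomputable def pairOf (σ : G) : Pair M where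
  d := Dhom G M σ
  n := Nhom G M
  dn := fun m => by
    show σ • Nhom G M m - Nhom G M m = 0
    rw [smul_Nhom, sub_self]
  nd := fun m => by
    show Nhom G M (σ • m - m) = 0
    rw [map_sub, Nhom_smul, sub_self]

end HQ

namespace HQ
open Tate

variable {G : Type} [Group G] [Finite G] {M : Type} [AddCommGroup M] [DistribMulAction G M]

/-- Evaluation of `dPlus` in degree 0. -/
lemma dPlus_zero_apply (f : C G M 0) (g : Fin 1 → G) :
    dPlus G M 0 f g = g 0 • f default - f default := by
  show g 0 • f (fun i => g i.succ) +
      ∑ j : Fin 1, ((-1 : ℤ) ^ (j.val + 1)) • f (Fin.contractNth j (· * ·) g) = _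
  rw [Fin.sum_univ_one]
  have h1 : (fun i : Fin 0 => g i.succ) = default := Subsingleton.elim _ _
  have h2 : Fin.contractNth (0 : Fin 1) (· * ·) g = default := Subsingleton.elim _ _
  rw [h1, h2]
  simp [sub_eq_add_neg]

/-- Evaluation of `dPlus` in degree 1. -/
lemma dPlus_one_apply (f : C G M 1) (g : Fin 2 → G) :
    dPlus G M 1 f g =
      g 0 • f (fun _ => g 1) - f (fun _ => g 0 * g 1) + f (fun _ => g 0) := by
  show g 0 • f (fun i => g i.succ) +
      ∑ j : Fin 2, ((-1 : ℤ) ^ (j.val + 1)) • f (Fin.contractNth j (· * ·) g) = _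
  rw [Fin.sum_univ_two]
  have h1 : (fun i : Fin 1 => g i.succ) = (fun _ => g 1) := by
    funext i
    have : i = 0 := Subsingleton.elim _ _
    subst this; rfl
  have h2 : Fin.contractNth (0 : Fin 2) (· * ·) g = (fun _ => g 0 * g 1) := by
    funext i
    have : i = 0 := Subsingleton.elim _ _
    subst this; rfl
  have h3 : Fin.contractNth (1 : Fin 2) (· * ·) g = (fun _ => g 0) := by
    funext i
    have : i = 0 := Subsingleton.elim _ _
    subst this; rfl
  rw [h1, h2, h3]
  simp [sub_eq_add_neg]
  abel

end HQ

set_option linter.unusedSectionVars false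
namespace HQ
open Tate

variable {G : Type} [Group G] [Finite G] (M : Type) [AddCommGroup M] [DistribMulAction G M]

lemma exists_pow_eq (σ : G) (hσ : ∀ x : G, x ∈ Subgroup.zpowers σ) (τ : G) :
    ∃ k : ℕ, σ ^ k = τ := by
  have h := hσ τ
  rw [← mem_powers_iff_mem_zpowers] at h
  obtain ⟨k, hk⟩ := h
  exact ⟨k, hk⟩

lemma fixed_of_gen {σ : G} (hσ : ∀ x : G, x ∈ Subgroup.zpowers σ) {m : M}
    (h : σ • m = m) (τ : G) : τ • m = m := by
  obtain ⟨k, rfl⟩ := exists_pow_eq σ hσ τ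
  induction k with
  | zero => rw [pow_zero, one_smul]
  | succ n ih => rw [pow_succ, mul_smul, h, ih]

lemma mem_ker_dPlus_zero (f : C G M 0) :
    f ∈ (dPlus G M 0).ker ↔ ∀ τ : G, τ • f default = f default := by
  constructor
  · intro hf τ
    have := congrFun (show dPlus G M 0 f = 0 from hf) (fun _ => τ)
    rw [dPlus_zero_apply] at this
    have : τ • f default - f default = 0 := this
    rwa [sub_eq_zero] at this
  · intro h
    show dPlus G M 0 f = 0
    funext g
    rw [dPlus_zero_apply, h (g 0), sub_self]
    rfl

noncomputable def phi0 (σ : G) : (dPlus G M 0).ker →+ (pairOf M σ).H :=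
  AddMonoidHom.mk' (fun f => (pairOf M σ).mk' (f.1 default)
      (by
        show σ • f.1 default - f.1 default = 0
        rw [(mem_ker_dPlus_zero M f.1).mp f.2 σ, sub_self]))
    (fun a b => Pair.mk'_add _ _ _ _ _)

lemma phi0_surjective (σ : G) (hσ : ∀ x : G, x ∈ Subgroup.zpowers σ) :
    Function.Surjective (phi0 M σ) := by
  intro y
  obtain ⟨m, hm, rfl⟩ := (pairOf M σ).mk'_surjective y
  have hm' : σ • m = m := by
    have : σ • m - m = 0 := hm
    rwa [sub_eq_zero] at this
  refine ⟨⟨fun _ => m, ?_⟩, rfl⟩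
  rw [mem_ker_dPlus_zero]
  exact fun τ => fixed_of_gen M hσ hm' τ

lemma phi0_ker (σ : G) :
    ((normMap G M 0).range).addSubgroupOf (dPlus G M 0).ker = (phi0 M σ).ker := by
  ext f
  rw [AddSubgroup.mem_addSubgroupOf, AddMonoidHom.mem_ker]
  show (↑f ∈ (normMap G M 0).range) ↔ (pairOf M σ).mk' (f.1 default) (by
    show σ • f.1 default - f.1 default = 0
    rw [(mem_ker_dPlus_zero M f.1).mp f.2 σ, sub_self]) = 0
  rw [Pair.mk'_eq_zero_iff]
  constructor
  · rintro ⟨h, hh⟩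
    exact ⟨h default, by rw [← hh]; rfl⟩
  · rintro ⟨x, hx⟩
    refine ⟨fun _ => x, ?_⟩
    funext v
    have hv : v = default := Subsingleton.elim _ _
    rw [hv]
    exact hx.symm

noncomputable def tate0Equiv (σ : G) (hσ : ∀ x : G, x ∈ Subgroup.zpowers σ) :
    Tate.tate G M 0 ≃+ (pairOf M σ).H :=
  ((QuotientAddGroup.quotientAddEquivOfEq (phi0_ker M σ)).trans
    (QuotientAddGroup.quotientKerEquivOfSurjective (phi0 M σ) (phi0_surjective M σ hσ)))

end HQ

namespace HQ
open Tate

variable {G : Type} [Group G] [Finite G] (M : Type) [AddCommGroup M] [DistribMulAction G M]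

lemma cocycle_rel {f : C G M 1} (hf : f ∈ (dPlus G M 1).ker) (τ ρ : G) :
    f (fun _ => τ * ρ) = τ • f (fun _ => ρ) + f (fun _ => τ) := by
  set g : Fin 2 → G := fun i => if i.val = 0 then τ else ρ with hg
  have h0 : g 0 = τ := rfl
  have h1 : g 1 = ρ := rfl
  have h4 := congrFun (show dPlus G M 1 f = 0 from hf) g
  rw [dPlus_one_apply, h0, h1] at h4
  have this2 : (τ • f (fun _ => ρ)) - f (fun _ => τ * ρ) + f (fun _ => τ) = 0 := h4
  have h3 : (τ • f (fun _ => ρ) + f (fun _ => τ)) - f (fun _ => τ * ρ) = 0 := by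
    rw [← this2]; abel
  exact (sub_eq_zero.mp h3).symm

lemma cocycle_one {f : C G M 1} (hf : f ∈ (dPlus G M 1).ker) : f (fun _ => 1) = 0 := by
  have := cocycle_rel M hf 1 1
  rw [one_mul, one_smul] at this
  have h := add_right_cancel (a := f (fun _ => (1:G))) (b := f (fun _ => (1:G)))
    (c := 0)
  apply h
  rw [zero_add]
  exact this.symm

/-- Partial sums `∑_{i<k} σ^i • x`. -/
def psum (σ : G) (x : M) (k : ℕ) : M := ∑ i ∈ Finset.range k, σ ^ i • x

lemma psum_one (σ : G) (x : M) : psum M σ x 1 = x := by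
  rw [psum, Finset.sum_range_one, pow_zero, one_smul]

lemma psum_succ (σ : G) (x : M) (k : ℕ) :
    psum M σ x (k + 1) = psum M σ x k + σ ^ k • x := Finset.sum_range_succ _ _

lemma psum_zero (σ : G) (x : M) : psum M σ x 0 = 0 := Finset.sum_range_zero _

lemma psum_add (σ : G) (x : M) (k l : ℕ) :
    psum M σ x (k + l) = psum M σ x k + σ ^ k • psum M σ x l := by
  induction l with
  | zero => rw [Nat.add_zero, psum_zero, smul_zero, add_zero]
  | succ n ih =>
    rw [show k + (n + 1) = (k + n) + 1 from rfl, psum_succ, ih, psum_succ, smul_add,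
      add_assoc, pow_add, mul_smul]

lemma cocycle_pow {f : C G M 1} (hf : f ∈ (dPlus G M 1).ker) (σ : G) (k : ℕ) :
    f (fun _ => σ ^ k) = psum M σ (f (fun _ => σ)) k := by
  induction k with
  | zero => rw [pow_zero, cocycle_one M hf, psum_zero]
  | succ n ih =>
    rw [pow_succ, cocycle_rel M hf (σ ^ n) σ, psum_succ, ← ih]
    abel

lemma Nhom_eq_psum {σ : G} (hσ : ∀ x : G, x ∈ Subgroup.zpowers σ) (x : M) :
    Nhom G M x = psum M σ x (orderOf σ) := by
  letI : Fintype G := Fintype.ofFinite G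
  show ∑ g : G, g • x = _
  rw [psum]
  symm
  apply Finset.sum_bij (fun (i : ℕ) (_ : i ∈ Finset.range (orderOf σ)) => σ ^ i)
  · intro a ha; exact Finset.mem_univ _
  · intro a₁ ha₁ a₂ ha₂ h
    exact pow_injOn_Iio_orderOf (Set.mem_Iio.mpr (Finset.mem_range.mp ha₁))
      (Set.mem_Iio.mpr (Finset.mem_range.mp ha₂)) h
  · intro b _
    obtain ⟨k, hk⟩ := exists_pow_eq σ hσ b
    refine ⟨k % orderOf σ, Finset.mem_range.mpr (Nat.mod_lt _ (orderOf_pos σ)), ?_⟩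
    rw [pow_mod_orderOf, hk]
  · intro a ha; rfl

lemma psum_period {σ : G} {x : M} (hx : psum M σ x (orderOf σ) = 0) (k : ℕ) :
    psum M σ x (k + orderOf σ) = psum M σ x k := by
  rw [psum_add, hx, smul_zero, add_zero]

lemma psum_mod {σ : G} {x : M} (hx : psum M σ x (orderOf σ) = 0) (k : ℕ) :
    psum M σ x k = psum M σ x (k % orderOf σ) := by
  conv_lhs => rw [← Nat.mod_add_div k (orderOf σ)]
  generalize k / orderOf σ = t
  induction t with
  | zero => rw [Nat.mul_zero, Nat.add_zero]
  | succ n ih =>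
    rw [Nat.mul_succ, ← Nat.add_assoc, psum_period M hx, ih]

lemma psum_well_defined {σ : G} {x : M} (hx : psum M σ x (orderOf σ) = 0) {k l : ℕ}
    (h : σ ^ k = σ ^ l) : psum M σ x k = psum M σ x l := by
  rw [psum_mod M hx k, psum_mod M hx l, pow_eq_pow_iff_modEq.mp h]

end HQ

namespace HQ
open Tate

variable {G : Type} [Group G] [Finite G] (M : Type) [AddCommGroup M] [DistribMulAction G M]

lemma norm_vanish {σ : G} (hσ : ∀ x : G, x ∈ Subgroup.zpowers σ)
    {f : C G M 1} (hf : f ∈ (dPlus G M 1).ker) :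
    Nhom G M (f (fun _ => σ)) = 0 := by
  rw [Nhom_eq_psum M hσ, ← cocycle_pow M hf σ, pow_orderOf_eq_one, cocycle_one M hf]

noncomputable def phi1 (σ : G) (hσ : ∀ x : G, x ∈ Subgroup.zpowers σ) :
    (dPlus G M 1).ker →+ (pairOf M σ).swap.H :=
  AddMonoidHom.mk' (fun f => (pairOf M σ).swap.mk' (f.1 (fun _ => σ))
      (show (pairOf M σ).swap.d (f.1 (fun _ => σ)) = 0 from norm_vanish M hσ f.2))
    (fun a b => Pair.mk'_add _ _ _ _ _)

lemma phi1_surjective (σ : G) (hσ : ∀ x : G, x ∈ Subgroup.zpowers σ) :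
    Function.Surjective (phi1 M σ hσ) := by
  intro y
  obtain ⟨x, hx, rfl⟩ := (pairOf M σ).swap.mk'_surjective y
  -- hx : Nhom x = 0
  have hpsum : psum M σ x (orderOf σ) = 0 := by
    rw [← Nhom_eq_psum M hσ]; exact hx
  have hdl : ∀ τ : G, σ ^ (exists_pow_eq σ hσ τ).choose = τ :=
    fun τ => (exists_pow_eq σ hσ τ).choose_spec
  set dl : G → ℕ := fun τ => (exists_pow_eq σ hσ τ).choose with hdl_def
  set F : C G M 1 := fun v => psum M σ x (dl (v 0)) with hF
  have hFval : ∀ τ : G, F (fun _ => τ) = psum M σ x (dl τ) := fun τ => rfl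
  have hFker : F ∈ (dPlus G M 1).ker := by
    show dPlus G M 1 F = 0
    funext g
    rw [dPlus_one_apply]
    rw [hFval, hFval, hFval]
    have e1 : σ ^ (dl (g 0) + dl (g 1)) = σ ^ (dl (g 0 * g 1)) := by
      rw [pow_add, hdl, hdl, hdl]
    have e2 : psum M σ x (dl (g 0 * g 1)) = psum M σ x (dl (g 0) + dl (g 1)) :=
      (psum_well_defined M hpsum e1).symm
    rw [e2, psum_add]
    have e3 : g 0 • psum M σ x (dl (g 1)) = σ ^ (dl (g 0)) • psum M σ x (dl (g 1)) := by
      rw [hdl]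
    rw [e3]
    show _ = (0 : C G M 2) g
    show _ = (0 : M)
    abel
  refine ⟨⟨F, hFker⟩, ?_⟩
  show (pairOf M σ).swap.mk' (F (fun _ => σ))
    (show (pairOf M σ).swap.d (F (fun _ => σ)) = 0 from norm_vanish M hσ hFker) =
    (pairOf M σ).swap.mk' x hx
  rw [Pair.mk'_eq_iff]
  refine ⟨0, ?_⟩
  have e4 : σ ^ (dl σ) = σ ^ 1 := by rw [hdl, pow_one]
  have : F (fun _ => σ) = x := by
    rw [hFval, psum_well_defined M hpsum e4, psum_one]
  rw [this, sub_self, map_zero]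

lemma phi1_ker (σ : G) (hσ : ∀ x : G, x ∈ Subgroup.zpowers σ) :
    ((dPlus G M 0).range).addSubgroupOf (dPlus G M 1).ker = (phi1 M σ hσ).ker := by
  ext f
  rw [AddSubgroup.mem_addSubgroupOf, AddMonoidHom.mem_ker]
  show (↑f ∈ (dPlus G M 0).range) ↔ (pairOf M σ).swap.mk' (f.1 (fun _ => σ))
    (show (pairOf M σ).swap.d (f.1 (fun _ => σ)) = 0 from norm_vanish M hσ f.2) = 0
  rw [Pair.mk'_eq_zero_iff]
  constructor
  · rintro ⟨h, hh⟩
    refine ⟨h default, ?_⟩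
    show f.1 (fun _ => σ) = σ • h default - h default
    rw [← hh, dPlus_zero_apply]
  · rintro ⟨m, hm⟩
    -- hm : f (fun _ => σ) = σ • m - m
    have hm' : f.1 (fun _ => σ) = σ • m - m := hm
    have key : ∀ k : ℕ, f.1 (fun _ => σ ^ k) = σ ^ k • m - m := by
      intro k
      induction k with
      | zero => rw [pow_zero, cocycle_one M f.2, one_smul, sub_self]
      | succ n ih =>
        rw [pow_succ, cocycle_rel M f.2 (σ ^ n) σ, hm', ih, smul_sub, smul_smul, ← pow_succ]
        abel
    refine ⟨fun _ => m, ?_⟩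
    funext v
    rw [dPlus_zero_apply]
    obtain ⟨k, hk⟩ := exists_pow_eq σ hσ (v 0)
    have hv2 : f.1 v = f.1 (fun _ => σ ^ k) :=
      congrArg f.1 (funext fun i => by
        have h0 : i = 0 := Fin.eq_zero i
        rw [h0]; exact hk.symm)
    show v 0 • m - m = f.1 v
    rw [hv2, key k, ← hk]

end HQ

namespace HQ
open Tate
variable {G : Type} [Group G] [Finite G] (M : Type) [AddCommGroup M] [DistribMulAction G M]

noncomputable def tate1Equiv (σ : G) (hσ : ∀ x : G, x ∈ Subgroup.zpowers σ) :
    Tate.tate G M 1 ≃+ (pairOf M σ).swap.H :=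
  (QuotientAddGroup.quotientAddEquivOfEq (phi1_ker M σ hσ)).trans
    (QuotientAddGroup.quotientKerEquivOfSurjective (phi1 M σ hσ) (phi1_surjective M σ hσ))

end HQ

set_option maxHeartbeats 1000000 in
/-- Multiplicativity of the Herbrand quotient: given a short exact sequence
`0 → M' → M → M'' → 0` of modules over a finite cyclic group `G`, if two of the Herbrand
quotients `h(M')`, `h(M)`, `h(M'')` are defined then so is the third, and
`h(M) = h(M') · h(M'')`. -/
theorem herbrand_quotient_multiplicative (G : Type) [Group G] [Finite G] (hG : IsCyclic G)
    (M' M M'' : Type) [AddCommGroup M'] [AddCommGroup M] [AddCommGroup M'']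
    [DistribMulAction G M'] [DistribMulAction G M] [DistribMulAction G M'']
    (f : M' →+ M) (g : M →+ M'')
    (hf : Function.Injective f) (hg : Function.Surjective g)
    (hfg : f.range = g.ker)
    (hfG : ∀ (σ : G) (x : M'), f (σ • x) = σ • f x)
    (hgG : ∀ (σ : G) (x : M), g (σ • x) = σ • g x)
    (h2 : (Tate.HerbrandDefined G M' ∧ Tate.HerbrandDefined G M) ∨
          (Tate.HerbrandDefined G M' ∧ Tate.HerbrandDefined G M'') ∨
          (Tate.HerbrandDefined G M ∧ Tate.HerbrandDefined G M'')) :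
    Tate.HerbrandDefined G M' ∧ Tate.HerbrandDefined G M ∧ Tate.HerbrandDefined G M'' ∧
      Tate.herbrand G M = Tate.herbrand G M' * Tate.herbrand G M'' := by
  classical
  obtain ⟨σ, hσ⟩ := hG.exists_generator
  set PA := HQ.pairOf M' σ with hPA
  set PB := HQ.pairOf M σ with hPB
  set PC := HQ.pairOf M'' σ with hPC
  -- compatibility of f and g with D and N
  have hfd : ∀ a, f (PA.d a) = PB.d (f a) := by
    intro a
    show f (σ • a - a) = σ • f a - f a
    rw [map_sub, hfG]
  have hgd : ∀ b, g (PB.d b) = PC.d (g b) := by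
    intro b
    show g (σ • b - b) = σ • g b - g b
    rw [map_sub, hgG]
  have hfn : ∀ a, f (PA.n a) = PB.n (f a) := by
    intro a
    letI : Fintype G := Fintype.ofFinite G
    show f (∑ τ : G, τ • a) = ∑ τ : G, τ • f a
    rw [map_sum]
    exact Finset.sum_congr rfl (fun τ _ => hfG τ a)
  have hgn : ∀ b, g (PB.n b) = PC.n (g b) := by
    intro b
    letI : Fintype G := Fintype.ofFinite G
    show g (∑ τ : G, τ • b) = ∑ τ : G, τ • g b
    rw [map_sum]
    exact Finset.sum_congr rfl (fun τ _ => hgG τ b)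
  have hses : HQ.SES PA PB PC f g := ⟨hf, hg, hfg, hfd, hfn, hgd, hgn⟩
  -- the six hexagon maps
  let f₁ : PA.H →+ PB.H := HQ.Hmap PA PB f hfd hfn
  let f₂ : PB.H →+ PC.H := HQ.Hmap PB PC g hgd hgn
  let f₃ : PC.H →+ PA.swap.H := HQ.delta hses
  let f₄ : PA.swap.H →+ PB.swap.H := HQ.Hmap PA.swap PB.swap f hfn hfd
  let f₅ : PB.swap.H →+ PC.swap.H := HQ.Hmap PB.swap PC.swap g hgn hgd
  let f₆ : PC.swap.H →+ PA.H := HQ.delta' hses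
  have e₁ : Function.Exact f₁ f₂ := HQ.exact_one hses
  have e₂ : Function.Exact f₂ f₃ := HQ.exact_two hses
  have e₃ : Function.Exact f₃ f₄ := HQ.exact_three hses
  have e₄ : Function.Exact f₄ f₅ := HQ.exact_one hses.swap
  have e₅ : Function.Exact f₅ f₆ := HQ.exact_five' hses
  have e₆ : Function.Exact f₆ f₁ := HQ.exact_six' hses
  -- equivalences with Tate cohomology
  have eA0 := HQ.tate0Equiv M' σ hσ
  have eB0 := HQ.tate0Equiv M σ hσ
  have eC0 := HQ.tate0Equiv M'' σ hσ
  have eA1 := HQ.tate1Equiv M' σ hσ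
  have eB1 := HQ.tate1Equiv M σ hσ
  have eC1 := HQ.tate1Equiv M'' σ hσ
  -- finiteness bookkeeping
  have defA : Tate.HerbrandDefined G M' ↔ (Finite PA.H ∧ Finite PA.swap.H) := by
    constructor
    · rintro ⟨h0, h1⟩
      exact ⟨Finite.of_equiv _ eA0.toEquiv, Finite.of_equiv _ eA1.toEquiv⟩
    · rintro ⟨h0, h1⟩
      exact ⟨Finite.of_equiv _ eA0.symm.toEquiv, Finite.of_equiv _ eA1.symm.toEquiv⟩
  have defB : Tate.HerbrandDefined G M ↔ (Finite PB.H ∧ Finite PB.swap.H) := by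
    constructor
    · rintro ⟨h0, h1⟩
      exact ⟨Finite.of_equiv _ eB0.toEquiv, Finite.of_equiv _ eB1.toEquiv⟩
    · rintro ⟨h0, h1⟩
      exact ⟨Finite.of_equiv _ eB0.symm.toEquiv, Finite.of_equiv _ eB1.symm.toEquiv⟩
  have defC : Tate.HerbrandDefined G M'' ↔ (Finite PC.H ∧ Finite PC.swap.H) := by
    constructor
    · rintro ⟨h0, h1⟩
      exact ⟨Finite.of_equiv _ eC0.toEquiv, Finite.of_equiv _ eC1.toEquiv⟩
    · rintro ⟨h0, h1⟩
      exact ⟨Finite.of_equiv _ eC0.symm.toEquiv, Finite.of_equiv _ eC1.symm.toEquiv⟩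
  have hfin : Finite PA.H ∧ Finite PA.swap.H ∧ Finite PB.H ∧ Finite PB.swap.H ∧
      Finite PC.H ∧ Finite PC.swap.H := by
    rcases h2 with ⟨hA, hB⟩ | ⟨hA, hC⟩ | ⟨hB, hC⟩
    · obtain ⟨a0, a1⟩ := defA.mp hA
      obtain ⟨b0, b1⟩ := defB.mp hB
      have c0 : Finite PC.H := HQ.finite_of_exact f₂ f₃ e₂ b0 a1
      have c1 : Finite PC.swap.H := HQ.finite_of_exact f₅ f₆ e₅ b1 a0
      exact ⟨a0, a1, b0, b1, c0, c1⟩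
    · obtain ⟨a0, a1⟩ := defA.mp hA
      obtain ⟨c0, c1⟩ := defC.mp hC
      have b0 : Finite PB.H := HQ.finite_of_exact f₁ f₂ e₁ a0 c0
      have b1 : Finite PB.swap.H := HQ.finite_of_exact f₄ f₅ e₄ a1 c1
      exact ⟨a0, a1, b0, b1, c0, c1⟩
    · obtain ⟨b0, b1⟩ := defB.mp hB
      obtain ⟨c0, c1⟩ := defC.mp hC
      have a1 : Finite PA.swap.H := HQ.finite_of_exact f₃ f₄ e₃ c0 b1
      have a0 : Finite PA.H := HQ.finite_of_exact f₆ f₁ e₆ c1 b0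
      exact ⟨a0, a1, b0, b1, c0, c1⟩
  obtain ⟨a0, a1, b0, b1, c0, c1⟩ := hfin
  refine ⟨defA.mpr ⟨a0, a1⟩, defB.mpr ⟨b0, b1⟩, defC.mpr ⟨c0, c1⟩, ?_⟩
  -- the cardinality identity
  have hcard := HQ.hexagon_card f₁ f₂ f₃ f₄ f₅ f₆ e₁ e₂ e₃ e₄ e₅ e₆
  -- translate cards
  have cA0 : Nat.card (Tate.tate G M' 0) = Nat.card PA.H := Nat.card_congr eA0.toEquiv
  have cB0 : Nat.card (Tate.tate G M 0) = Nat.card PB.H := Nat.card_congr eB0.toEquiv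
  have cC0 : Nat.card (Tate.tate G M'' 0) = Nat.card PC.H := Nat.card_congr eC0.toEquiv
  have cA1 : Nat.card (Tate.tate G M' 1) = Nat.card PA.swap.H := Nat.card_congr eA1.toEquiv
  have cB1 : Nat.card (Tate.tate G M 1) = Nat.card PB.swap.H := Nat.card_congr eB1.toEquiv
  have cC1 : Nat.card (Tate.tate G M'' 1) = Nat.card PC.swap.H := Nat.card_congr eC1.toEquiv
  have pA0 : 0 < Nat.card PA.H := Nat.card_pos
  have pA1 : 0 < Nat.card PA.swap.H := Nat.card_pos
  have pB0 : 0 < Nat.card PB.H := Nat.card_pos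
  have pB1 : 0 < Nat.card PB.swap.H := Nat.card_pos
  have pC0 : 0 < Nat.card PC.H := Nat.card_pos
  have pC1 : 0 < Nat.card PC.swap.H := Nat.card_pos
  rw [Tate.herbrand, Tate.herbrand, Tate.herbrand, cA0, cB0, cC0, cA1, cB1, cC1]
  have hq := congrArg (Nat.cast : ℕ → ℚ) hcard
  push_cast at hq
  rw [div_mul_div_comm, div_eq_div_iff (by positivity) (by positivity)]
  linear_combination -hq
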